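/- Let (G_n, p_n) be a Mittag-Leffler inverse sequence of groups with inverse limit G and projections π_n : G → G_n. Then (G_n, p_n) is isomorphic in Tower-Grp to the inverse sequence (π_n(G), p_n|_{π_{n+1}(G)}). -/
import Mathlib


/-- Composite bonding map `p_{n m} : X_m → X_n` (for `n ≤ m`) of an inverse
sequence `(X_n, p_n)`. -/
def tbond (X : ℕ → Type u) (p : ∀ n, X (n + 1) → X n) {n m : ℕ} (h : n ≤ m) :
    X m → X n :=
  Nat.leRecOn h (fun {k} (g : X k → X n) (x : X (k + 1)) => g (p k x)) id

/-- The Mittag-Leffler property for an inverse sequence of sets: for every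
`n₀` there is `n₁ > n₀` such that the image of `X_n` in `X_{n₀}` equals the
image of `X_{n₁}` in `X_{n₀}` for all `n > n₁`. -/
def IsML (X : ℕ → Type u) (p : ∀ n, X (n + 1) → X n) : Prop :=
  ∀ n₀ : ℕ, ∃ n₁ : ℕ, ∃ h₁ : n₀ < n₁, ∀ n : ℕ, ∀ h : n₁ < n,
    Set.range (tbond X p (h₁.le.trans h.le)) = Set.range (tbond X p h₁.le)

/-- The inverse limit of an inverse sequence of groups, as a subgroup of the
product `∀ n, G n`: the threads `(g_n)` with `p n (g (n+1)) = g n`. -/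
def invLim (G : ℕ → Type u) [∀ n, Group (G n)] (p : ∀ n, G (n + 1) →* G n) :
    Subgroup (∀ n, G n) where
  carrier := {g | ∀ n, p n (g (n + 1)) = g n}
  mul_mem' := by
    intro a b ha hb n
    simp [map_mul, ha n, hb n]
  one_mem' := by
    intro n
    simp
  inv_mem' := by
    intro a ha n
    simp [ha n]

/-- A morphism of inverse sequences in `Tower-Set`. -/
structure TowerMor (X : ℕ → Type u) (p : ∀ n, X (n + 1) → X n)
    (Y : ℕ → Type v) (q : ∀ n, Y (n + 1) → Y n) where
  idx : ℕ → ℕ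
  f : ∀ n, X (idx n) → Y n
  coh : ∀ n n' : ℕ, ∀ h : n ≤ n', ∃ m : ℕ, ∃ h1 : idx n ≤ m, ∃ h2 : idx n' ≤ m,
    ∀ x : X m, f n (tbond X p h1 x) = tbond Y q h (f n' (tbond X p h2 x))

/-- Two inverse sequences of groups are isomorphic in `Tower-Grp` if there are
tower morphisms in both directions whose level maps are group homomorphisms
and whose composites are equivalent to the identity morphisms. -/
def TowerGrpIso (X : ℕ → Type u) [∀ n, Group (X n)] (p : ∀ n, X (n + 1) → X n)
    (Y : ℕ → Type v) [∀ n, Group (Y n)] (q : ∀ n, Y (n + 1) → Y n) : Prop :=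
  ∃ (F : TowerMor X p Y q) (G : TowerMor Y q X p),
    (∀ n, ∀ a b : X (F.idx n), F.f n (a * b) = F.f n a * F.f n b) ∧
    (∀ n, ∀ a b : Y (G.idx n), G.f n (a * b) = G.f n a * G.f n b) ∧
    (∀ n : ℕ, ∃ m : ℕ, ∃ h1 : F.idx (G.idx n) ≤ m, ∃ h2 : n ≤ m,
      ∀ x : X m, G.f n (F.f (G.idx n) (tbond X p h1 x)) = tbond X p h2 x) ∧
    (∀ n : ℕ, ∃ m : ℕ, ∃ h1 : G.idx (F.idx n) ≤ m, ∃ h2 : n ≤ m,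
      ∀ y : Y m, F.f n (G.f (F.idx n) (tbond Y q h1 y)) = tbond Y q h2 y)

/-- The image `π_n(G)` of the inverse limit in `G_n`, as a subgroup. -/
def projImage (G : ℕ → Type u) [∀ n, Group (G n)]
    (p : ∀ n, G (n + 1) →* G n) (n : ℕ) : Subgroup (G n) :=
  (invLim G p).map (Pi.evalMonoidHom G n)

/-- The bonding maps restricted to the images of the inverse limit. -/
def projImageBond (G : ℕ → Type u) [∀ n, Group (G n)]
    (p : ∀ n, G (n + 1) →* G n) (n : ℕ) :
    projImage G p (n + 1) → projImage G p n := fun x =>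
  ⟨p n x.1, by
    obtain ⟨g, hg, hgx⟩ := Subgroup.mem_map.mp x.2
    refine Subgroup.mem_map.mpr ⟨g, hg, ?_⟩
    have h1 : g (n + 1) = x.1 := hgx
    show g n = p n x.1
    rw [← h1]
    exact (hg n).symm⟩

section aux
variable (X : ℕ → Type u) (p : ∀ n, X (n + 1) → X n)

theorem tbond_self {n : ℕ} (h : n ≤ n) (x : X n) : tbond X p h x = x := by
  unfold tbond
  rw [Nat.leRecOn_self]; rfl

theorem tbond_succ {n m : ℕ} (h : n ≤ m) (h2 : n ≤ m + 1) (x : X (m + 1)) :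
    tbond X p h2 x = tbond X p h (p m x) := by
  unfold tbond
  rw [Nat.leRecOn_succ (C := fun k => X k → X n) h (h2 := h2) id]

theorem tbond_trans {n k m : ℕ} (h1 : n ≤ k) (h2 : k ≤ m) (h3 : n ≤ m) (x : X m) :
    tbond X p h1 (tbond X p h2 x) = tbond X p h3 x := by
  induction m, h2 using Nat.le_induction with
  | base => rw [tbond_self]
  | succ m h2 ih =>
      rw [tbond_succ X p h2 (h2 := Nat.le_succ_of_le h2),
        tbond_succ X p (h1.trans h2) (h2 := h3), ih (h1.trans h2)]

theorem tbond_irrel {n m : ℕ} (h h' : n ≤ m) (x : X m) :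
    tbond X p h x = tbond X p h' x := rfl

/-- `Stab X p n y`: `y` is in the image of every later stage. -/
def Stab (n : ℕ) (y : X n) : Prop :=
  ∀ m : ℕ, ∀ h : n ≤ m, y ∈ Set.range (tbond X p h)

theorem stab_tbond {n k : ℕ} (y : X n) (hy : Stab X p n y) (h : k ≤ n) :
    Stab X p k (tbond X p h y) := by
  intro j hj
  by_cases hjn : n ≤ j
  · obtain ⟨x, hx⟩ := hy j hjn
    exact ⟨x, by rw [← hx, tbond_trans X p h hjn hj]⟩
  · have hjn' : j ≤ n := le_of_not_ge hjn
    exact ⟨tbond X p hjn' y, tbond_trans X p hj hjn' h y⟩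

theorem stab_lift (hML : IsML X p) (k : ℕ) (y : X k) (hy : Stab X p k y) :
    ∃ z : X (k + 1), Stab X p (k + 1) z ∧ p k z = y := by
  obtain ⟨n₁, h₁, hst⟩ := hML (k + 1)
  have hk : k ≤ n₁ := (Nat.lt_of_succ_lt h₁).le
  obtain ⟨x, hx⟩ := hy n₁ hk
  refine ⟨tbond X p h₁.le x, ?_, ?_⟩
  · intro j hj
    by_cases hjn : j ≤ n₁
    · exact ⟨tbond X p hjn x, tbond_trans X p hj hjn h₁.le x⟩
    · have hj' : n₁ < j := lt_of_not_ge hjn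
      have := hst j hj'
      have hz : tbond X p h₁.le x ∈ Set.range (tbond X p h₁.le) := ⟨x, rfl⟩
      rw [← this] at hz
      exact hz
  · have h1 : tbond X p (Nat.le_succ k) (tbond X p h₁.le x) = tbond X p hk x :=
      tbond_trans X p (Nat.le_succ k) h₁.le hk x
    have h2 : tbond X p (Nat.le_succ k) (tbond X p h₁.le x)
        = p k (tbond X p h₁.le x) := by
      rw [tbond_succ X p (le_refl k) (Nat.le_succ k), tbond_self]
    rw [← h2, h1, hx]

/-- A chain of stable elements lying above a given stable element. -/
noncomputable def stabChain (hML : IsML X p) {n : ℕ} (y : X n) (hy : Stab X p n y) :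
    ∀ k : ℕ, {z : X k // Stab X p k z}
  | 0 => ⟨tbond X p (Nat.zero_le n) y, stab_tbond X p y hy (Nat.zero_le n)⟩
  | (k + 1) =>
      if h : k + 1 ≤ n then ⟨tbond X p h y, stab_tbond X p y hy h⟩
      else ⟨Classical.choose (stab_lift X p hML k (stabChain hML y hy k).1
          (stabChain hML y hy k).2),
        (Classical.choose_spec (stab_lift X p hML k (stabChain hML y hy k).1
          (stabChain hML y hy k).2)).1⟩

theorem stabChain_le (hML : IsML X p) {n : ℕ} (y : X n) (hy : Stab X p n y)
    {k : ℕ} (h : k ≤ n) : (stabChain X p hML y hy k).1 = tbond X p h y := by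
  cases k with
  | zero => rfl
  | succ j => rw [stabChain, dif_pos h]

theorem stabChain_thread (hML : IsML X p) {n : ℕ} (y : X n) (hy : Stab X p n y)
    (k : ℕ) : p k (stabChain X p hML y hy (k + 1)).1 = (stabChain X p hML y hy k).1 := by
  by_cases h : k + 1 ≤ n
  · rw [stabChain_le X p hML y hy h,
      stabChain_le X p hML y hy (Nat.le_of_succ_le h),
      ← tbond_self X p (le_refl k) (p k (tbond X p h y)),
      ← tbond_succ X p (le_refl k) (Nat.le_succ k),
      tbond_trans X p (Nat.le_succ k) h (Nat.le_of_succ_le h)]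
  · have : stabChain X p hML y hy (k + 1)
        = ⟨Classical.choose (stab_lift X p hML k (stabChain X p hML y hy k).1
            (stabChain X p hML y hy k).2),
          (Classical.choose_spec (stab_lift X p hML k (stabChain X p hML y hy k).1
            (stabChain X p hML y hy k).2)).1⟩ := by
      rw [stabChain, dif_neg h]
    rw [this]
    exact (Classical.choose_spec (stab_lift X p hML k (stabChain X p hML y hy k).1
      (stabChain X p hML y hy k).2)).2

end aux

section grpaux
variable (G : ℕ → Type u) [∀ n, Group (G n)] (p : ∀ n, G (n + 1) →* G n)

theorem tbond_mul {n m : ℕ} (h : n ≤ m) (a b : G m) :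
    tbond G (fun k => ⇑(p k)) h (a * b)
      = tbond G (fun k => ⇑(p k)) h a * tbond G (fun k => ⇑(p k)) h b := by
  induction m, h using Nat.le_induction with
  | base => rw [tbond_self, tbond_self, tbond_self]
  | succ m h ih =>
      rw [tbond_succ G _ h (h2 := Nat.le_succ_of_le h),
        tbond_succ G _ h (h2 := Nat.le_succ_of_le h) a,
        tbond_succ G _ h (h2 := Nat.le_succ_of_le h) b]
      show tbond G _ h (p m (a * b)) = _
      rw [map_mul, ih]

theorem tbond_proj_val {n m : ℕ} (h : n ≤ m) (y : ↥(projImage G p m)) :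
    (tbond (fun k => ↥(projImage G p k)) (projImageBond G p) h y).1
      = tbond G (fun k => ⇑(p k)) h y.1 := by
  induction m, h using Nat.le_induction with
  | base => rw [tbond_self, tbond_self]
  | succ m h ih =>
      rw [tbond_succ (fun k => ↥(projImage G p k)) _ h (h2 := Nat.le_succ_of_le h),
        tbond_succ G _ h (h2 := Nat.le_succ_of_le h), ih]
      rfl

theorem stab_mem_projImage (hML : IsML G fun n => ⇑(p n)) {n : ℕ} {y : G n}
    (hy : Stab G (fun n => ⇑(p n)) n y) : y ∈ projImage G p n := by
  refine Subgroup.mem_map.mpr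
    ⟨fun k => (stabChain G (fun n => ⇑(p n)) hML y hy k).1,
      fun k => stabChain_thread G (fun n => ⇑(p n)) hML y hy k, ?_⟩
  show (stabChain G (fun n => ⇑(p n)) hML y hy n).1 = y
  rw [stabChain_le G (fun n => ⇑(p n)) hML y hy (le_refl n), tbond_self]

end grpaux

/-- A Mittag-Leffler inverse sequence of groups is isomorphic in `Tower-Grp`
to the inverse sequence of the images of the inverse limit, with the
restricted bonding maps. -/
theorem mittagLeffler_iso_to_projection_images
    (G : ℕ → Type u) [∀ n, Group (G n)] (p : ∀ n, G (n + 1) →* G n)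
    (hML : IsML G (fun n => ⇑(p n))) :
    TowerGrpIso G (fun n => ⇑(p n))
      (fun n => projImage G p n) (projImageBond G p) := by
  classical
  set p' : ∀ n, G (n + 1) → G n := fun n => ⇑(p n) with hp'
  let ml : ℕ → ℕ := fun n => (hML n).choose
  have hml : ∀ n, n < ml n := fun n => (hML n).choose_spec.choose
  have hst : ∀ n, ∀ j, ∀ hj : ml n < j,
      Set.range (tbond G p' ((hml n).le.trans hj.le))
        = Set.range (tbond G p' (hml n).le) :=
    fun n => (hML n).choose_spec.choose_spec
  have stab_of : ∀ n, ∀ x : G (ml n), Stab G p' n (tbond G p' (hml n).le x) := by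
    intro n x j hj
    by_cases hjm : j ≤ ml n
    · exact ⟨tbond G p' hjm x, tbond_trans G p' hj hjm (hml n).le x⟩
    · have hj' : ml n < j := lt_of_not_ge hjm
      have hmem : tbond G p' (hml n).le x
          ∈ Set.range (tbond G p' ((hml n).le.trans hj'.le)) := by
        rw [hst n j hj']
        exact ⟨x, rfl⟩
      exact hmem
  refine ⟨⟨fun n => ml n,
      fun n x => ⟨tbond G p' (hml n).le x,
        stab_mem_projImage G p hML (stab_of n x)⟩, ?_⟩,
    ⟨fun n => n, fun n y => y.1, ?_⟩, ?_, ?_, ?_, ?_⟩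
  · -- coherence of F
    intro n n' h
    refine ⟨max (ml n) (ml n'), le_max_left _ _, le_max_right _ _, fun x => ?_⟩
    refine Subtype.ext ?_
    rw [tbond_proj_val]
    show tbond G p' (hml n).le (tbond G p' (le_max_left _ _) x)
      = tbond G p' h (tbond G p' (hml n').le (tbond G p' (le_max_right _ _) x))
    rw [tbond_trans G p' (hml n).le (le_max_left _ _)
        ((hml n).le.trans (le_max_left _ _)),
      tbond_trans G p' (hml n').le (le_max_right _ _)
        ((hml n').le.trans (le_max_right _ _)),
      tbond_trans G p' h ((hml n').le.trans (le_max_right _ _))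
        ((hml n).le.trans (le_max_left _ _))]
  · -- coherence of G
    intro n n' h
    refine ⟨n', h, le_refl n', fun y => ?_⟩
    rw [tbond_self (fun k => ↥(projImage G p k)) (projImageBond G p) (le_refl n') y]
    exact tbond_proj_val G p h y
  · -- F multiplicative
    intro n a b
    refine Subtype.ext ?_
    show tbond G p' (hml n).le (a * b)
      = (tbond G p' (hml n).le a) * (tbond G p' (hml n).le b)
    exact tbond_mul G p (hml n).le a b
  · -- G multiplicative
    intro n a b
    rfl
  · -- G ∘ F ≃ id
    intro n
    refine ⟨ml n, le_refl (ml n), (hml n).le, fun x => ?_⟩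
    show tbond G p' (hml n).le (tbond G p' (le_refl (ml n)) x)
      = tbond G p' (hml n).le x
    rw [tbond_self]
  · -- F ∘ G ≃ id
    intro n
    refine ⟨ml n, le_refl (ml n), (hml n).le, fun y => ?_⟩
    rw [tbond_self (fun k => ↥(projImage G p k)) (projImageBond G p)
      (le_refl (ml n)) y]
    exact Subtype.ext (tbond_proj_val G p (hml n).le y).symm
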